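/- Let p be prime, n ≥ 2, and r+1 ≤ j ≤ n-1 with r ≥ 1. In H(K // K_0(p^n)) with V_i the characteristic function of K_0(p^n) y(p^i) K_0(p^n), one has V_r * V_j = (p-1) p^{n-j-1} V_r = V_j * V_r. -/

import Mathlib

open Matrix MeasureTheory
open scoped ENNReal

/-- `K₀(pⁿ)` inside `K = GL₂(ℤ_p)`. -/
def K0Z (p : ℕ) [Fact p.Prime] (n : ℕ) : Set (Matrix (Fin 2) (Fin 2) ℤ_[p]) :=
  {g | IsUnit g.det ∧ (p : ℤ_[p]) ^ n ∣ g 1 0}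

/-- The double coset `K₀ g K₀`. -/
def dCosetZ (p : ℕ) [Fact p.Prime] (K : Set (Matrix (Fin 2) (Fin 2) ℤ_[p]))
    (g : Matrix (Fin 2) (Fin 2) ℤ_[p]) : Set (Matrix (Fin 2) (Fin 2) ℤ_[p]) :=
  {m | ∃ k1 ∈ K, ∃ k2 ∈ K, m = k1 * g * k2}

/-- `V_j`: the characteristic function of `K₀(pⁿ) y(p^j) K₀(pⁿ)`. -/
noncomputable def Vfun (p : ℕ) [Fact p.Prime] (n j : ℕ) :
    Matrix (Fin 2) (Fin 2) ℤ_[p] → ℂ :=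
  Set.indicator (dCosetZ p (K0Z p n) !![1, 0; (p : ℤ_[p]) ^ j, 1]) (fun _ => (1 : ℂ))

/-- `U₀`: the characteristic function of `K₀(pⁿ) w(1) K₀(pⁿ)`. -/
noncomputable def U0fun (p : ℕ) [Fact p.Prime] (n : ℕ) :
    Matrix (Fin 2) (Fin 2) ℤ_[p] → ℂ :=
  Set.indicator (dCosetZ p (K0Z p n) !![0, -1; 1, 0]) (fun _ => (1 : ℂ))

/-- The unit `1` of the Hecke algebra: the characteristic function of `K₀(pⁿ)`. -/
noncomputable def onefun (p : ℕ) [Fact p.Prime] (n : ℕ) :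
    Matrix (Fin 2) (Fin 2) ℤ_[p] → ℂ :=
  Set.indicator (K0Z p n) (fun _ => (1 : ℂ))

/-- `Y_r = 1 + Σ_{j=r}^{n-1} V_j` (so `Y_n = 1`). -/
noncomputable def Yfun (p : ℕ) [Fact p.Prime] (n r : ℕ) :
    Matrix (Fin 2) (Fin 2) ℤ_[p] → ℂ :=
  fun h => onefun p n h + ∑ j ∈ Finset.Icc r (n - 1), Vfun p n j h

/-- Convolution with respect to the measure `μ` (Haar measure of `K`,
normalized so that `μ(K₀(pⁿ)) = 1`). -/
noncomputable def convZ (p : ℕ) [Fact p.Prime]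
    [MeasurableSpace (Matrix (Fin 2) (Fin 2) ℤ_[p])]
    (μ : Measure (Matrix (Fin 2) (Fin 2) ℤ_[p]))
    (f1 f2 : Matrix (Fin 2) (Fin 2) ℤ_[p] → ℂ) :
    Matrix (Fin 2) (Fin 2) ℤ_[p] → ℂ :=
  fun h => ∫ g, f1 g * f2 (g⁻¹ * h) ∂μ

/-- Hypotheses making `μ` the normalized Haar measure of `K = GL₂(ℤ_p)`
(extended by zero to all matrices). -/
structure IsHaarK (p : ℕ) [Fact p.Prime] (n : ℕ)
    [MeasurableSpace (Matrix (Fin 2) (Fin 2) ℤ_[p])]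
    (μ : Measure (Matrix (Fin 2) (Fin 2) ℤ_[p])) : Prop where
  normal : μ (K0Z p n) = 1
  supp : μ {g : Matrix (Fin 2) (Fin 2) ℤ_[p] | ¬ IsUnit g.det} = 0
  left_inv : ∀ a : Matrix (Fin 2) (Fin 2) ℤ_[p], IsUnit a.det →
    Measure.map (fun g => a * g) μ = μ
  right_inv : ∀ a : Matrix (Fin 2) (Fin 2) ℤ_[p], IsUnit a.det →
    Measure.map (fun g => g * a) μ = μ

namespace Stmt7Aux

variable {p : ℕ} [hp : Fact p.Prime]

lemma dvd_iff_norm_le {x : ℤ_[p]} {m : ℕ} :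
    (p : ℤ_[p]) ^ m ∣ x ↔ ‖x‖ ≤ (p : ℝ) ^ (-(m : ℤ)) := by
  rw [PadicInt.norm_le_pow_iff_mem_span_pow, Ideal.mem_span_singleton]

lemma one_lt_pR : (1 : ℝ) < p := by exact_mod_cast hp.out.one_lt

lemma ppow_lt_one {i : ℕ} (hi : 1 ≤ i) : (p : ℝ) ^ (-(i : ℤ)) < 1 := by
  have := zpow_right_strictMono₀ (one_lt_pR (p := p)) (show -(i:ℤ) < 0 by omega)
  simpa using this

lemma ppow_lt_ppow {a b : ℕ} (h : a < b) : (p : ℝ) ^ (-(b : ℤ)) < (p : ℝ) ^ (-(a : ℤ)) :=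
  zpow_right_strictMono₀ (one_lt_pR (p := p)) (by omega)

/-- `C_i = {g : unit det, v(g 1 0) = i}`. -/
def Cset (p : ℕ) [Fact p.Prime] (i : ℕ) : Set (Matrix (Fin 2) (Fin 2) ℤ_[p]) :=
  {g | IsUnit g.det ∧ ‖g 1 0‖ = (p : ℝ) ^ (-(i : ℤ))}

lemma norm_mul_unit {u x : ℤ_[p]} (hu : IsUnit u) : ‖u * x‖ = ‖x‖ := by
  rw [norm_mul, PadicInt.isUnit_iff.mp hu, one_mul]

lemma norm_add_left {x y : ℤ_[p]} (h : ‖y‖ < ‖x‖) : ‖x + y‖ = ‖x‖ := by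
  rw [PadicInt.norm_add_eq_max_of_ne (ne_of_gt h), max_eq_left h.le]

lemma diag_units {g : Matrix (Fin 2) (Fin 2) ℤ_[p]} (hdet : IsUnit g.det)
    (h10 : ‖g 1 0‖ < 1) : IsUnit (g 0 0) ∧ IsUnit (g 1 1) := by
  have hmul : IsUnit (g 0 0 * g 1 1) := by
    by_contra hcon
    have h1 : ‖g 0 0 * g 1 1‖ < 1 := PadicInt.not_isUnit_iff.mp hcon
    have h2 : ‖g 0 1 * g 1 0‖ < 1 := by
      calc ‖g 0 1 * g 1 0‖ = ‖g 0 1‖ * ‖g 1 0‖ := norm_mul _ _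
        _ ≤ 1 * ‖g 1 0‖ := mul_le_mul_of_nonneg_right (PadicInt.norm_le_one _) (norm_nonneg _)
        _ < 1 := by simpa using h10
    have : ‖g.det‖ < 1 := by
      rw [Matrix.det_fin_two, sub_eq_add_neg]
      exact lt_of_le_of_lt (PadicInt.nonarchimedean _ _) (max_lt h1 (by rwa [norm_neg]))
    exact absurd (PadicInt.isUnit_iff.mp hdet) (ne_of_lt this)
  exact ⟨isUnit_of_mul_isUnit_left hmul, isUnit_of_mul_isUnit_right hmul⟩

lemma Cset_diag {g : Matrix (Fin 2) (Fin 2) ℤ_[p]} {i : ℕ} (hi : 1 ≤ i)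
    (hg : g ∈ Cset p i) : IsUnit (g 0 0) ∧ IsUnit (g 1 1) :=
  diag_units hg.1 (hg.2 ▸ ppow_lt_one hi)

lemma K0_diag {n : ℕ} (hn : 1 ≤ n) {k : Matrix (Fin 2) (Fin 2) ℤ_[p]}
    (hk : k ∈ K0Z p n) : IsUnit (k 0 0) ∧ IsUnit (k 1 1) := by
  refine diag_units hk.1 (lt_of_le_of_lt (dvd_iff_norm_le.mp hk.2) (ppow_lt_one hn))

lemma mul_entry10 (x z : Matrix (Fin 2) (Fin 2) ℤ_[p]) :
    (x * z) 1 0 = x 1 0 * z 0 0 + x 1 1 * z 1 0 := by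
  simp [Matrix.mul_apply, Fin.sum_univ_two]

lemma K0_mul {n : ℕ} {k k' : Matrix (Fin 2) (Fin 2) ℤ_[p]}
    (hk : k ∈ K0Z p n) (hk' : k' ∈ K0Z p n) : k * k' ∈ K0Z p n := by
  refine ⟨by rw [Matrix.det_mul]; exact hk.1.mul hk'.1, ?_⟩
  rw [mul_entry10]
  exact dvd_add (hk.2.mul_right _) (hk'.2.mul_left _)

lemma mul_mem_Cset_left {a b : ℕ} (ha : 1 ≤ a) (hab : a < b)
    {x z : Matrix (Fin 2) (Fin 2) ℤ_[p]} (hx : x ∈ Cset p a) (hz : z ∈ Cset p b) :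
    x * z ∈ Cset p a := by
  refine ⟨by rw [Matrix.det_mul]; exact hx.1.mul hz.1, ?_⟩
  rw [mul_entry10]
  have hz00 : IsUnit (z 0 0) := (Cset_diag (le_trans ha hab.le) hz).1
  have h1 : ‖x 1 0 * z 0 0‖ = (p : ℝ) ^ (-(a : ℤ)) := by
    rw [norm_mul, PadicInt.isUnit_iff.mp hz00, mul_one, hx.2]
  have h2 : ‖x 1 1 * z 1 0‖ < (p : ℝ) ^ (-(a : ℤ)) := by
    calc ‖x 1 1 * z 1 0‖ = ‖x 1 1‖ * ‖z 1 0‖ := norm_mul _ _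
      _ ≤ 1 * ‖z 1 0‖ := mul_le_mul_of_nonneg_right (PadicInt.norm_le_one _) (norm_nonneg _)
      _ = (p:ℝ) ^ (-(b:ℤ)) := by rw [one_mul, hz.2]
      _ < _ := ppow_lt_ppow hab
  rw [norm_add_left (h1 ▸ h2), h1]

lemma mul_mem_Cset_right {a b : ℕ} (ha : 1 ≤ a) (hab : a < b)
    {x z : Matrix (Fin 2) (Fin 2) ℤ_[p]} (hx : x ∈ Cset p b) (hz : z ∈ Cset p a) :
    x * z ∈ Cset p a := by
  refine ⟨by rw [Matrix.det_mul]; exact hx.1.mul hz.1, ?_⟩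
  rw [mul_entry10]
  have hx11 : IsUnit (x 1 1) := (Cset_diag (le_trans ha hab.le) hx).2
  have h1 : ‖x 1 1 * z 1 0‖ = (p : ℝ) ^ (-(a : ℤ)) := by
    rw [norm_mul, PadicInt.isUnit_iff.mp hx11, one_mul, hz.2]
  have h2 : ‖x 1 0 * z 0 0‖ < (p : ℝ) ^ (-(a : ℤ)) := by
    calc ‖x 1 0 * z 0 0‖ = ‖x 1 0‖ * ‖z 0 0‖ := norm_mul _ _
      _ ≤ ‖x 1 0‖ * 1 := mul_le_mul_of_nonneg_left (PadicInt.norm_le_one _) (norm_nonneg _)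
      _ = (p:ℝ) ^ (-(b:ℤ)) := by rw [mul_one, hx.2]
      _ < _ := ppow_lt_ppow hab
  rw [add_comm, norm_add_left (h1 ▸ h2), h1]

lemma inv_mem_Cset {i : ℕ} {x : Matrix (Fin 2) (Fin 2) ℤ_[p]} (hx : x ∈ Cset p i) :
    x⁻¹ ∈ Cset p i := by
  refine ⟨Matrix.isUnit_nonsing_inv_det x hx.1, ?_⟩
  have : x⁻¹ 1 0 = Ring.inverse x.det * (-(x 1 0)) := by
    rw [Matrix.inv_def, Matrix.smul_apply, Matrix.adjugate_fin_two, smul_eq_mul]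
    simp
  rw [this, norm_mul_unit (by rw [isUnit_ringInverse]; exact hx.1), norm_neg, hx.2]

lemma yMat_entry (t : ℤ_[p]) : (!![1, 0; t, 1] : Matrix (Fin 2) (Fin 2) ℤ_[p]) 1 0 = t := by simp

lemma yMat_det (t : ℤ_[p]) : (!![1, 0; t, 1] : Matrix (Fin 2) (Fin 2) ℤ_[p]).det = 1 := by
  simp [Matrix.det_fin_two_of]

lemma dCoset_eq_Cset {n j : ℕ} (hj1 : 1 ≤ j) (hj2 : j + 1 ≤ n) :
    dCosetZ p (K0Z p n) !![1, 0; (p : ℤ_[p]) ^ j, 1] = Cset p j := by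
  ext g
  constructor
  · rintro ⟨k1, hk1, k2, hk2, rfl⟩
    have h1 := (K0_diag (by omega) hk1).2
    have h2 := (K0_diag (by omega) hk2).1
    refine ⟨?_, ?_⟩
    · rw [Matrix.det_mul, Matrix.det_mul, yMat_det, mul_one]
      exact hk1.1.mul hk2.1
    · have he : (k1 * !![1, 0; (p : ℤ_[p]) ^ j, 1] * k2) 1 0 =
          k1 1 1 * (p:ℤ_[p])^j * k2 0 0 + (k1 1 0 * k2 0 0 + k1 1 1 * k2 1 0) := by
        rw [mul_entry10, mul_entry10]
        simp [Matrix.mul_apply, Fin.sum_univ_two]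
        ring
      rw [he]
      have hA : ‖k1 1 1 * (p:ℤ_[p])^j * k2 0 0‖ = (p:ℝ) ^ (-(j:ℤ)) := by
        have he2 : k1 1 1 * (p:ℤ_[p])^j * k2 0 0 = (k1 1 1 * k2 0 0) * (p:ℤ_[p])^j := by ring
        rw [he2, norm_mul_unit (h1.mul h2), PadicInt.norm_p_pow]
      have hB : ‖k1 1 0 * k2 0 0 + k1 1 1 * k2 1 0‖ < (p:ℝ) ^ (-(j:ℤ)) := by
        have hb1 : ‖k1 1 0 * k2 0 0‖ ≤ (p:ℝ) ^ (-(n:ℤ)) := by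
          rw [norm_mul]
          exact le_trans (mul_le_mul_of_nonneg_left (PadicInt.norm_le_one _) (norm_nonneg _))
            (by rw [mul_one]; exact dvd_iff_norm_le.mp hk1.2)
        have hb2 : ‖k1 1 1 * k2 1 0‖ ≤ (p:ℝ) ^ (-(n:ℤ)) := by
          calc ‖k1 1 1 * k2 1 0‖ = ‖k1 1 1‖ * ‖k2 1 0‖ := norm_mul _ _
            _ ≤ 1 * ‖k2 1 0‖ := mul_le_mul_of_nonneg_right (PadicInt.norm_le_one _) (norm_nonneg _)
            _ ≤ _ := by rw [one_mul]; exact dvd_iff_norm_le.mp hk2.2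
        have := PadicInt.nonarchimedean (k1 1 0 * k2 0 0) (k1 1 1 * k2 1 0)
        refine lt_of_le_of_lt (this.trans (max_le hb1 hb2)) (ppow_lt_ppow (by omega))
      rw [norm_add_left (hA ▸ hB), hA]
  · rintro ⟨hdet, hnorm⟩
    have hgmem : g ∈ Cset p j := ⟨hdet, hnorm⟩
    have ha : IsUnit (g 0 0) := (Cset_diag hj1 hgmem).1
    set a' : ℤ_[p] := ↑ha.unit⁻¹ with ha'
    have haa' : g 0 0 * a' = 1 := by
      rw [ha']; exact ha.mul_val_inv
    have hnca : ‖g 1 0 * a'‖ = (p : ℝ) ^ (-(j:ℤ)) := by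
      rw [mul_comm, norm_mul_unit (Units.isUnit _)]; exact hnorm
    obtain ⟨v, hv⟩ : (p : ℤ_[p]) ^ j ∣ g 1 0 * a' := dvd_iff_norm_le.mpr hnca.le
    have hvu : IsUnit v := by
      rw [PadicInt.isUnit_iff]
      have hnv : ‖g 1 0 * a'‖ = (p:ℝ) ^ (-(j:ℤ)) * ‖v‖ := by
        rw [hv, norm_mul, PadicInt.norm_p_pow]
      rw [hnca] at hnv
      have hppos : (0:ℝ) < (p:ℝ) ^ (-(j:ℤ)) :=
        zpow_pos (lt_trans zero_lt_one one_lt_pR) _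
      exact (mul_left_cancel₀ (ne_of_gt hppos)
        (by rw [mul_one, ← hnv] : (p:ℝ)^(-(j:ℤ)) * 1 = (p:ℝ)^(-(j:ℤ)) * ‖v‖)).symm
    set b' : ℤ_[p] := ↑hvu.unit⁻¹ with hb'
    have hvb' : v * b' = 1 := by
      rw [hb']; exact hvu.mul_val_inv
    refine ⟨!![1, 0; 0, v], ⟨?_, ?_⟩, !![g 0 0, g 0 1; 0, b' * (g 1 1 - g 1 0 * a' * g 0 1)],
      ⟨?_, ?_⟩, ?_⟩
    · rw [Matrix.det_fin_two_of]; simpa using hvu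
    · simp
    · rw [Matrix.det_fin_two_of]
      have : g 0 0 * (b' * (g 1 1 - g 1 0 * a' * g 0 1)) - g 0 1 * 0 = b' * g.det := by
        rw [Matrix.det_fin_two]
        linear_combination (-(b' * g 0 1 * g 1 0)) * haa'
      rw [this]
      exact (Units.isUnit _).mul hdet
    · simp
    · ext i k
      fin_cases i <;> fin_cases k <;>
        simp [Matrix.mul_apply, Fin.sum_univ_two]
      · linear_combination g 0 0 * hv - g 1 0 * haa'
      · linear_combination g 0 1 * hv - (g 1 1 - g 1 0 * a' * g 0 1) * hvb'

/-! ### Measure part -/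

section Meas

set_option linter.unusedSectionVars false

variable [MeasurableSpace (Matrix (Fin 2) (Fin 2) ℤ_[p])]
  [BorelSpace (Matrix (Fin 2) (Fin 2) ℤ_[p])]

lemma continuous_entry (i j : Fin 2) :
    Continuous fun g : Matrix (Fin 2) (Fin 2) ℤ_[p] => g i j :=
  (continuous_apply j).comp (continuous_apply i)

lemma measurableSet_unitdet :
    MeasurableSet {g : Matrix (Fin 2) (Fin 2) ℤ_[p] | IsUnit g.det} := by
  have : {g : Matrix (Fin 2) (Fin 2) ℤ_[p] | IsUnit g.det} =
      (fun g : Matrix (Fin 2) (Fin 2) ℤ_[p] => ‖g.det‖) ⁻¹' {1} := by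
    ext g; simp [PadicInt.isUnit_iff]
  rw [this]
  exact (continuous_id.matrix_det.norm).measurable (measurableSet_singleton _)

lemma measurableSet_Cset (i : ℕ) : MeasurableSet (Cset p i) := by
  have : Cset p i = {g : Matrix (Fin 2) (Fin 2) ℤ_[p] | IsUnit g.det} ∩
      ((fun g : Matrix (Fin 2) (Fin 2) ℤ_[p] => ‖g 1 0‖) ⁻¹' {(p:ℝ) ^ (-(i:ℤ))}) := rfl
  rw [this]
  exact measurableSet_unitdet.inter
    (((continuous_entry 1 0).norm).measurable (measurableSet_singleton _))

lemma measurableSet_K0Z (n : ℕ) : MeasurableSet (K0Z p n) := by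
  have : K0Z p n = {g : Matrix (Fin 2) (Fin 2) ℤ_[p] | IsUnit g.det} ∩
      ((fun g : Matrix (Fin 2) (Fin 2) ℤ_[p] => ‖g 1 0‖) ⁻¹' Set.Iic ((p:ℝ) ^ (-(n:ℤ)))) := by
    ext g
    exact and_congr Iff.rfl dvd_iff_norm_le
  rw [this]
  exact measurableSet_unitdet.inter
    (((continuous_entry 1 0).norm).measurable measurableSet_Iic)

lemma measurable_mulLeft (a : Matrix (Fin 2) (Fin 2) ℤ_[p]) :
    Measurable fun g : Matrix (Fin 2) (Fin 2) ℤ_[p] => a * g :=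
  (continuous_const.matrix_mul continuous_id).measurable

/-- The left coset `y(t) K₀(pⁿ)`, presented as a preimage. -/
def Lcoset (p : ℕ) [Fact p.Prime] (n : ℕ) (t : ℤ_[p]) : Set (Matrix (Fin 2) (Fin 2) ℤ_[p]) :=
  (fun x => !![1, 0; -t, 1] * x) ⁻¹' K0Z p n

lemma measurableSet_Lcoset (n : ℕ) (t : ℤ_[p]) : MeasurableSet (Lcoset p n t) :=
  (measurableSet_K0Z n).preimage (measurable_mulLeft _)

lemma mem_Lcoset {n : ℕ} {t : ℤ_[p]} {x : Matrix (Fin 2) (Fin 2) ℤ_[p]} :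
    x ∈ Lcoset p n t ↔ IsUnit x.det ∧ (p : ℤ_[p]) ^ n ∣ x 1 0 - t * x 0 0 := by
  have key : (!![1, 0; -t, 1] * x) 1 0 = x 1 0 - t * x 0 0 := by
    rw [mul_entry10]
    simp
    ring
  have kdet : (!![1, 0; -t, 1] * x).det = x.det := by
    rw [Matrix.det_mul, yMat_det, one_mul]
  show (!![1, 0; -t, 1] * x) ∈ K0Z p n ↔ _
  unfold K0Z
  rw [Set.mem_setOf_eq, key, kdet]

lemma meas_Lcoset {n : ℕ} {μ : Measure (Matrix (Fin 2) (Fin 2) ℤ_[p])}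
    (hLI : ∀ a : Matrix (Fin 2) (Fin 2) ℤ_[p], IsUnit a.det →
      Measure.map (fun g => a * g) μ = μ)
    (t : ℤ_[p]) : μ (Lcoset p n t) = μ (K0Z p n) := by
  have hdet : IsUnit ((!![1, 0; -t, 1] : Matrix (Fin 2) (Fin 2) ℤ_[p]).det) := by
    rw [yMat_det]; exact isUnit_one
  have hmap := hLI _ hdet
  have : μ (Lcoset p n t) = (μ.map (fun g => !![1, 0; -t, 1] * g)) (K0Z p n) := by
    rw [Measure.map_apply (measurable_mulLeft _) (measurableSet_K0Z n)]
    rfl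
  rw [this, hmap]

lemma x00_unit {n j : ℕ} (hn1 : 1 ≤ n) (hj1 : 1 ≤ j) {c : ℤ_[p]}
    {x : Matrix (Fin 2) (Fin 2) ℤ_[p]} (hdet : IsUnit x.det)
    (hdvd : (p : ℤ_[p]) ^ n ∣ x 1 0 - (p : ℤ_[p]) ^ j * c * x 0 0) : IsUnit (x 0 0) := by
  by_contra hcon
  have h00 : (p : ℤ_[p]) ∣ x 0 0 := (PadicInt.norm_lt_one_iff_dvd _).mp
    (PadicInt.not_isUnit_iff.mp hcon)
  have h10 : (p : ℤ_[p]) ∣ x 1 0 := by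
    have h1 : (p : ℤ_[p]) ∣ x 1 0 - (p : ℤ_[p]) ^ j * c * x 0 0 :=
      dvd_trans (dvd_pow_self _ (by omega)) hdvd
    have h2 : (p : ℤ_[p]) ∣ (p : ℤ_[p]) ^ j * c * x 0 0 :=
      ((dvd_pow_self (p : ℤ_[p]) (by omega : j ≠ 0)).mul_right c).mul_right _
    simpa using dvd_add h1 h2
  have : (p : ℤ_[p]) ∣ x.det := by
    rw [Matrix.det_fin_two]
    exact dvd_sub (h00.mul_right _) (h10.mul_left _)
  have := (PadicInt.norm_lt_one_iff_dvd _).mpr this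
  exact absurd (PadicInt.isUnit_iff.mp hdet) (ne_of_lt this)

lemma pZp_ne_zero : (p : ℤ_[p]) ≠ 0 := Nat.cast_ne_zero.mpr hp.out.ne_zero

lemma Cset_eq_biUnion {n j : ℕ} (hj1 : 1 ≤ j) (hjn : j + 1 ≤ n) :
    Cset p j = ⋃ t ∈ (Finset.range (p ^ (n - j))).filter (fun t => ¬ p ∣ t),
      Lcoset p n ((p : ℤ_[p]) ^ j * (t : ℤ_[p])) := by
  ext g
  simp only [Set.mem_iUnion, Finset.mem_filter, Finset.mem_range, exists_prop]
  constructor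
  · intro hg
    have hdet := hg.1
    have hnorm := hg.2
    have ha : IsUnit (g 0 0) := (Cset_diag hj1 hg).1
    set a' : ℤ_[p] := ↑ha.unit⁻¹ with ha'
    have haa' : g 0 0 * a' = 1 := by rw [ha']; exact ha.mul_val_inv
    have hnca : ‖g 1 0 * a'‖ = (p : ℝ) ^ (-(j:ℤ)) := by
      rw [mul_comm, norm_mul_unit (Units.isUnit _)]; exact hnorm
    obtain ⟨v, hv⟩ : (p : ℤ_[p]) ^ j ∣ g 1 0 * a' := dvd_iff_norm_le.mpr hnca.le
    have hvu : IsUnit v := by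
      rw [PadicInt.isUnit_iff]
      have hnv : ‖g 1 0 * a'‖ = (p:ℝ) ^ (-(j:ℤ)) * ‖v‖ := by
        rw [hv, norm_mul, PadicInt.norm_p_pow]
      rw [hnca] at hnv
      have hppos : (0:ℝ) < (p:ℝ) ^ (-(j:ℤ)) := zpow_pos (lt_trans zero_lt_one one_lt_pR) _
      exact (mul_left_cancel₀ (ne_of_gt hppos)
        (by rw [mul_one, ← hnv] : (p:ℝ)^(-(j:ℤ)) * 1 = (p:ℝ)^(-(j:ℤ)) * ‖v‖)).symm
    set t : ℕ := v.appr (n - j) with htdef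
    have hspec : (p : ℤ_[p]) ^ (n - j) ∣ v - (t : ℤ_[p]) := by
      have := PadicInt.appr_spec (n - j) v
      rwa [Ideal.mem_span_singleton] at this
    refine ⟨t, ⟨PadicInt.appr_lt _ _, ?_⟩, ?_⟩
    · intro hpt
      have h1 : (p : ℤ_[p]) ∣ (t : ℤ_[p]) := by exact_mod_cast Nat.cast_dvd_cast hpt
      have h2 : (p : ℤ_[p]) ∣ v - (t : ℤ_[p]) :=
        dvd_trans (dvd_pow_self _ (by omega)) hspec
      have : (p : ℤ_[p]) ∣ v := by simpa using dvd_add h2 h1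
      have := (PadicInt.norm_lt_one_iff_dvd _).mpr this
      exact absurd (PadicInt.isUnit_iff.mp hvu) (ne_of_lt this)
    · rw [mem_Lcoset]
      refine ⟨hdet, ?_⟩
      have key : g 1 0 - (p : ℤ_[p]) ^ j * (t : ℤ_[p]) * g 0 0 =
          (p : ℤ_[p]) ^ j * ((v - (t : ℤ_[p])) * g 0 0) := by
        linear_combination g 0 0 * hv - g 1 0 * haa'
      rw [key, show (n : ℕ) = j + (n - j) by omega, pow_add]
      exact mul_dvd_mul_left _ (hspec.mul_right _)
  · rintro ⟨t, ⟨htlt, htp⟩, hx⟩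
    rw [mem_Lcoset] at hx
    obtain ⟨hdet, hdvd⟩ := hx
    have h00 : IsUnit (g 0 0) := x00_unit (by omega) hj1 hdet hdvd
    have htu : IsUnit (t : ℤ_[p]) := by
      rw [PadicInt.isUnit_iff]
      by_contra hcon
      have : (p : ℤ_[p]) ∣ (t : ℤ_[p]) := by
        have hlt : ‖(t : ℤ_[p])‖ < 1 :=
          lt_of_le_of_ne (PadicInt.norm_le_one _) hcon
        exact (PadicInt.norm_lt_one_iff_dvd _).mp hlt
      have : (p : ℤ_[p]) ^ 1 ∣ ((t : ℤ) : ℤ_[p]) := by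
        rw [pow_one]; exact_mod_cast this
      rw [PadicInt.pow_p_dvd_int_iff] at this
      have h' : (p : ℤ) ^ 1 ∣ (t : ℤ) := this
      rw [pow_one] at h'
      exact htp (by exact_mod_cast h')
    refine ⟨hdet, ?_⟩
    have hrw : g 1 0 = (p : ℤ_[p]) ^ j * ((t : ℤ_[p]) * g 0 0) +
        (g 1 0 - (p : ℤ_[p]) ^ j * (t : ℤ_[p]) * g 0 0) := by ring
    rw [hrw]
    have hA : ‖(p : ℤ_[p]) ^ j * ((t : ℤ_[p]) * g 0 0)‖ = (p : ℝ) ^ (-(j:ℤ)) := by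
      rw [mul_comm, norm_mul_unit (htu.mul h00), PadicInt.norm_p_pow]
    have hB : ‖g 1 0 - (p : ℤ_[p]) ^ j * (t : ℤ_[p]) * g 0 0‖ < (p : ℝ) ^ (-(j:ℤ)) :=
      lt_of_le_of_lt (dvd_iff_norm_le.mp hdvd) (ppow_lt_ppow (by omega))
    rw [norm_add_left (hA ▸ hB), hA]

lemma Lcoset_disj {n j : ℕ} (hj1 : 1 ≤ j) (hjn : j + 1 ≤ n) {t s : ℕ}
    (htlt : t < p ^ (n - j)) (hslt : s < p ^ (n - j)) (hne : t ≠ s) :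
    Disjoint (Lcoset p n ((p : ℤ_[p]) ^ j * (t : ℤ_[p])))
      (Lcoset p n ((p : ℤ_[p]) ^ j * (s : ℤ_[p]))) := by
  rw [Set.disjoint_left]
  intro x hxt hxs
  rw [mem_Lcoset] at hxt hxs
  obtain ⟨hdet, ht⟩ := hxt
  obtain ⟨-, hs⟩ := hxs
  have h00 : IsUnit (x 0 0) := x00_unit (by omega) hj1 hdet ht
  have hdiff : (p : ℤ_[p]) ^ n ∣
      (p : ℤ_[p]) ^ j * ((((s : ℤ) - (t : ℤ) : ℤ) : ℤ_[p]) * x 0 0) := by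
    have := dvd_sub ht hs
    have heq : (x 1 0 - (p : ℤ_[p]) ^ j * (t : ℤ_[p]) * x 0 0) -
        (x 1 0 - (p : ℤ_[p]) ^ j * (s : ℤ_[p]) * x 0 0) =
        (p : ℤ_[p]) ^ j * ((((s : ℤ) - (t : ℤ) : ℤ) : ℤ_[p]) * x 0 0) := by
      push_cast
      ring
    rwa [heq] at this
  set i : ℤ_[p] := ↑h00.unit⁻¹ with hi
  have hii : x 0 0 * i = 1 := by rw [hi]; exact h00.mul_val_inv
  have hdvd2 : (p : ℤ_[p]) ^ n ∣ (p : ℤ_[p]) ^ j * (((s : ℤ) - (t : ℤ) : ℤ) : ℤ_[p]) := by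
    have := hdiff.mul_right i
    have heq : (p : ℤ_[p]) ^ j * ((((s : ℤ) - (t : ℤ) : ℤ) : ℤ_[p]) * x 0 0) * i =
        (p : ℤ_[p]) ^ j * (((s : ℤ) - (t : ℤ) : ℤ) : ℤ_[p]) := by
      linear_combination ((p : ℤ_[p]) ^ j * (((s : ℤ) - (t : ℤ) : ℤ) : ℤ_[p])) * hii
    rwa [heq] at this
  rw [show (n : ℕ) = j + (n - j) by omega, pow_add,
    mul_dvd_mul_iff_left (pow_ne_zero j pZp_ne_zero)] at hdvd2
  rw [PadicInt.pow_p_dvd_int_iff] at hdvd2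
  have h1 : (t : ℤ) < (p : ℤ) ^ (n - j) := by exact_mod_cast htlt
  have h2 : (s : ℤ) < (p : ℤ) ^ (n - j) := by exact_mod_cast hslt
  have h3 : (0 : ℤ) ≤ t := Int.natCast_nonneg _
  have h4 : (0 : ℤ) ≤ s := Int.natCast_nonneg _
  have h5 : ((p : ℤ) ^ (n - j) : ℤ) ∣ (s : ℤ) - (t : ℤ) := by exact_mod_cast hdvd2
  have : ((s : ℤ) - (t : ℤ)) = 0 := by
    refine Int.eq_zero_of_abs_lt_dvd h5 ?_
    rw [abs_lt]
    omega
  omega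

lemma meas_Cset {n j : ℕ} (hj1 : 1 ≤ j) (hjn : j + 1 ≤ n)
    {μ : Measure (Matrix (Fin 2) (Fin 2) ℤ_[p])}
    (hLI : ∀ a : Matrix (Fin 2) (Fin 2) ℤ_[p], IsUnit a.det →
      Measure.map (fun g => a * g) μ = μ)
    (hN : μ (K0Z p n) = 1) :
    μ (Cset p j) = (Nat.totient (p ^ (n - j)) : ℝ≥0∞) := by
  set T := (Finset.range (p ^ (n - j))).filter (fun t => ¬ p ∣ t) with hT
  have hcard : T.card = Nat.totient (p ^ (n - j)) := by
    rw [Nat.totient_eq_card_coprime]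
    congr 1
    apply Finset.filter_congr
    intro t ht
    have hiff : (p ^ (n - j)).Coprime t ↔ ¬ p ∣ t := by
      rw [Nat.coprime_pow_left_iff (by omega : 0 < n - j),
        Nat.Prime.coprime_iff_not_dvd hp.out]
    simp [hiff]
  rw [Cset_eq_biUnion hj1 hjn, ← hT]
  rw [measure_biUnion_finset ?hd (fun t _ => measurableSet_Lcoset n _)]
  · rw [Finset.sum_congr rfl (fun t _ => (meas_Lcoset hLI _).trans hN)]
    simp [hcard]
  case hd =>
    intro a haT b hbT hab
    simp only [hT, Finset.coe_filter, Set.mem_setOf_eq, Finset.mem_range] at haT hbT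
    exact Lcoset_disj hj1 hjn haT.1 hbT.1 hab

end Meas

end Stmt7Aux

/-- `V_r * V_j = (p-1) p^{n-j-1} V_r = V_j * V_r` for `1 ≤ r`, `r+1 ≤ j ≤ n-1`. -/
theorem stmt7 (p : ℕ) [Fact p.Prime] (n r j : ℕ) (hn : 2 ≤ n)
    (hr : 1 ≤ r) (hj1 : r + 1 ≤ j) (hj2 : j ≤ n - 1)
    [mM : MeasurableSpace (Matrix (Fin 2) (Fin 2) ℤ_[p])]
    (hB : mM = borel (Matrix (Fin 2) (Fin 2) ℤ_[p]))
    (μ : Measure (Matrix (Fin 2) (Fin 2) ℤ_[p])) (hμ : IsHaarK p n μ) :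
    ∀ h, convZ p μ (Vfun p n r) (Vfun p n j) h =
        ((p : ℂ) - 1) * (p : ℂ) ^ (n - j - 1) * Vfun p n r h ∧
      convZ p μ (Vfun p n j) (Vfun p n r) h =
        ((p : ℂ) - 1) * (p : ℂ) ^ (n - j - 1) * Vfun p n r h := by
  haveI hBS : BorelSpace (Matrix (Fin 2) (Fin 2) ℤ_[p]) := ⟨hB⟩
  intro h
  have hrlt : r < j := by omega
  have hrn : r + 1 ≤ n := by omega
  have hjn : j + 1 ≤ n := by omega
  have hj1' : 1 ≤ j := by omega
  have hVr : Vfun p n r = Set.indicator (Stmt7Aux.Cset p r) (fun _ => (1 : ℂ)) := by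
    unfold Vfun; rw [Stmt7Aux.dCoset_eq_Cset hr hrn]
  have hVj : Vfun p n j = Set.indicator (Stmt7Aux.Cset p j) (fun _ => (1 : ℂ)) := by
    unfold Vfun; rw [Stmt7Aux.dCoset_eq_Cset hj1' hjn]
  have hmeasC : μ (Stmt7Aux.Cset p j) = (Nat.totient (p ^ (n - j)) : ℝ≥0∞) :=
    Stmt7Aux.meas_Cset hj1' hjn hμ.left_inv hμ.normal
  have hpp : p.Prime := Fact.out
  have hconst : ((Nat.totient (p ^ (n - j)) : ℝ) : ℂ) =
      ((p : ℂ) - 1) * (p : ℂ) ^ (n - j - 1) := by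
    rw [Nat.totient_prime_pow hpp (show 0 < n - j by omega)]
    push_cast [Nat.cast_sub hpp.one_le]
    ring
  by_cases hh : h ∈ Stmt7Aux.Cset p r
  · -- h in C_r
    have hVrh : Vfun p n r h = 1 := by
      rw [hVr, Set.indicator_of_mem hh]
    set E : Set (Matrix (Fin 2) (Fin 2) ℤ_[p]) :=
      (fun g => h⁻¹ * g) ⁻¹' (Stmt7Aux.Cset p j) with hE
    have hEmeas : MeasurableSet E :=
      (Stmt7Aux.measurableSet_Cset j).preimage (Stmt7Aux.measurable_mulLeft _)
    have hmuE : μ E = μ (Stmt7Aux.Cset p j) := by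
      have hdetinv : IsUnit (h⁻¹ : Matrix (Fin 2) (Fin 2) ℤ_[p]).det :=
        Matrix.isUnit_nonsing_inv_det h hh.1
      calc μ E = (μ.map (fun g => h⁻¹ * g)) (Stmt7Aux.Cset p j) :=
          (Measure.map_apply (Stmt7Aux.measurable_mulLeft _)
            (Stmt7Aux.measurableSet_Cset j)).symm
        _ = μ (Stmt7Aux.Cset p j) := by rw [hμ.left_inv _ hdetinv]
    constructor
    · -- V_r * V_j
      have hpt : ∀ g, Vfun p n r g * Vfun p n j (g⁻¹ * h) =
          Set.indicator E (fun _ => (1 : ℂ)) g := by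
        intro g
        rw [hVr, hVj]
        by_cases hgE : g ∈ E
        · have hx : h⁻¹ * g ∈ Stmt7Aux.Cset p j := hgE
          have hgeq : h * (h⁻¹ * g) = g := Matrix.mul_nonsing_inv_cancel_left h g hh.1
          have hg1 : g ∈ Stmt7Aux.Cset p r := by
            rw [← hgeq]; exact Stmt7Aux.mul_mem_Cset_left hr hrlt hh hx
          have hg2 : g⁻¹ * h ∈ Stmt7Aux.Cset p j := by
            have : g⁻¹ * h = (h⁻¹ * g)⁻¹ := by
              rw [Matrix.mul_inv_rev, Matrix.nonsing_inv_nonsing_inv h hh.1]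
            rw [this]
            exact Stmt7Aux.inv_mem_Cset hx
          rw [Set.indicator_of_mem hg1, Set.indicator_of_mem hg2,
            Set.indicator_of_mem hgE, one_mul]
        · by_cases hg1 : g ∈ Stmt7Aux.Cset p r
          · by_cases hg2 : g⁻¹ * h ∈ Stmt7Aux.Cset p j
            · exfalso
              apply hgE
              have : h⁻¹ * g = (g⁻¹ * h)⁻¹ := by
                rw [Matrix.mul_inv_rev, Matrix.nonsing_inv_nonsing_inv g hg1.1]
              show h⁻¹ * g ∈ Stmt7Aux.Cset p j
              rw [this]
              exact Stmt7Aux.inv_mem_Cset hg2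
            · rw [Set.indicator_of_notMem hg2, Set.indicator_of_notMem hgE, mul_zero]
          · rw [Set.indicator_of_notMem hg1, Set.indicator_of_notMem hgE, zero_mul]
      calc convZ p μ (Vfun p n r) (Vfun p n j) h
          = ∫ g, Set.indicator E (fun _ => (1 : ℂ)) g ∂μ :=
            integral_congr_ae (Filter.Eventually.of_forall hpt)
        _ = (μ E).toReal • (1 : ℂ) := integral_indicator_const _ hEmeas
        _ = ((p : ℂ) - 1) * (p : ℂ) ^ (n - j - 1) * Vfun p n r h := by
            rw [hmuE, hmeasC, hVrh, ENNReal.toReal_natCast, Complex.real_smul, mul_one, mul_one]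
            exact_mod_cast hconst
    · -- V_j * V_r
      have hpt : ∀ g, Vfun p n j g * Vfun p n r (g⁻¹ * h) =
          Set.indicator (Stmt7Aux.Cset p j) (fun _ => (1 : ℂ)) g := by
        intro g
        rw [hVr, hVj]
        by_cases hg1 : g ∈ Stmt7Aux.Cset p j
        · have hg2 : g⁻¹ * h ∈ Stmt7Aux.Cset p r :=
            Stmt7Aux.mul_mem_Cset_right hr hrlt (Stmt7Aux.inv_mem_Cset hg1) hh
          rw [Set.indicator_of_mem hg1, Set.indicator_of_mem hg2, one_mul]
        · rw [Set.indicator_of_notMem hg1, zero_mul]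
      calc convZ p μ (Vfun p n j) (Vfun p n r) h
          = ∫ g, Set.indicator (Stmt7Aux.Cset p j) (fun _ => (1 : ℂ)) g ∂μ :=
            integral_congr_ae (Filter.Eventually.of_forall hpt)
        _ = (μ (Stmt7Aux.Cset p j)).toReal • (1 : ℂ) :=
            integral_indicator_const _ (Stmt7Aux.measurableSet_Cset j)
        _ = ((p : ℂ) - 1) * (p : ℂ) ^ (n - j - 1) * Vfun p n r h := by
            rw [hmeasC, hVrh, ENNReal.toReal_natCast, Complex.real_smul, mul_one, mul_one]
            exact_mod_cast hconst
  · -- h not in C_r : everything vanishes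
    have hVrh : Vfun p n r h = 0 := by
      rw [hVr, Set.indicator_of_notMem hh]
    constructor
    · have hpt : ∀ g, Vfun p n r g * Vfun p n j (g⁻¹ * h) = 0 := by
        intro g
        rw [hVr, hVj]
        by_cases hg1 : g ∈ Stmt7Aux.Cset p r
        · by_cases hg2 : g⁻¹ * h ∈ Stmt7Aux.Cset p j
          · exfalso
            apply hh
            have hgeq : g * (g⁻¹ * h) = h := Matrix.mul_nonsing_inv_cancel_left g h hg1.1
            rw [← hgeq]
            exact Stmt7Aux.mul_mem_Cset_left hr hrlt hg1 hg2
          · rw [Set.indicator_of_notMem hg2, mul_zero]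
        · rw [Set.indicator_of_notMem hg1, zero_mul]
      calc convZ p μ (Vfun p n r) (Vfun p n j) h = ∫ _g, (0 : ℂ) ∂μ :=
            integral_congr_ae (Filter.Eventually.of_forall hpt)
        _ = 0 := integral_zero _ _
        _ = ((p : ℂ) - 1) * (p : ℂ) ^ (n - j - 1) * Vfun p n r h := by
            rw [hVrh, mul_zero]
    · have hpt : ∀ g, Vfun p n j g * Vfun p n r (g⁻¹ * h) = 0 := by
        intro g
        rw [hVr, hVj]
        by_cases hg1 : g ∈ Stmt7Aux.Cset p j
        · by_cases hg2 : g⁻¹ * h ∈ Stmt7Aux.Cset p r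
          · exfalso
            apply hh
            have hgeq : g * (g⁻¹ * h) = h := Matrix.mul_nonsing_inv_cancel_left g h hg1.1
            rw [← hgeq]
            exact Stmt7Aux.mul_mem_Cset_right hr hrlt hg1 hg2
          · rw [Set.indicator_of_notMem hg2, mul_zero]
        · rw [Set.indicator_of_notMem hg1, zero_mul]
      calc convZ p μ (Vfun p n j) (Vfun p n r) h = ∫ _g, (0 : ℂ) ∂μ :=
            integral_congr_ae (Filter.Eventually.of_forall hpt)
        _ = 0 := integral_zero _ _
        _ = ((p : ℂ) - 1) * (p : ℂ) ^ (n - j - 1) * Vfun p n r h := by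
            rw [hVrh, mul_zero]
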